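/- Let m ≥ 1 and consider the complex vector space H = ((Fin m → Bool) → ℂ). Define the invertible linear maps D by (D f)(x) = (−1)^{x₁·x₂⋯x_m} f(x) (where x_i ∈ {0,1} is the i-th bit, i.e. D is the (m−1)-fold controlled-Z gate) and, for each j, X_j by (X_j f)(x) = f(x with the j-th bit flipped). Then the m-fold sequential group commutator satisfies K(⋯K(K(D, X₁), X₂)⋯, X_m) = −id, where K(A,B) = A⁻¹ ∘ B⁻¹ ∘ A ∘ B. -/

import Mathlib

/-- The `(m−1)`-fold controlled-`Z` gate `(D f)(x) = (−1)^{x₁·x₂⋯x_m}·f(x)` on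
`(Fin m → Bool) → ℂ`, as an invertible linear map. -/
noncomputable def Dop (m : ℕ) :
    ((Fin m → Bool) → ℂ) ≃ₗ[ℂ] ((Fin m → Bool) → ℂ) where
  toFun f := fun x => (-1 : ℂ) ^ (∏ i : Fin m, (if x i then 1 else 0 : ℕ)) * f x
  invFun f := fun x => (-1 : ℂ) ^ (∏ i : Fin m, (if x i then 1 else 0 : ℕ)) * f x
  map_add' f f' := by funext x; simp [mul_add]
  map_smul' c f := by funext x; simp; ring
  left_inv f := by
    funext x
    show (-1 : ℂ) ^ (∏ i : Fin m, (if x i then 1 else 0 : ℕ)) *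
      ((-1 : ℂ) ^ (∏ i : Fin m, (if x i then 1 else 0 : ℕ)) * f x) = f x
    rw [← mul_assoc, ← pow_add, Even.neg_one_pow ⟨_, rfl⟩, one_mul]
  right_inv f := by
    funext x
    show (-1 : ℂ) ^ (∏ i : Fin m, (if x i then 1 else 0 : ℕ)) *
      ((-1 : ℂ) ^ (∏ i : Fin m, (if x i then 1 else 0 : ℕ)) * f x) = f x
    rw [← mul_assoc, ← pow_add, Even.neg_one_pow ⟨_, rfl⟩, one_mul]

/-- The bit-flip (Pauli `X`) operator on the `j`-th qubit,
`(X_j f)(x) = f(x with the j-th bit flipped)`, as an invertible linear map. -/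
noncomputable def Xop {m : ℕ} (j : Fin m) :
    ((Fin m → Bool) → ℂ) ≃ₗ[ℂ] ((Fin m → Bool) → ℂ) where
  toFun f := fun x => f (Function.update x j (!(x j)))
  invFun f := fun x => f (Function.update x j (!(x j)))
  map_add' f f' := rfl
  map_smul' c f := rfl
  left_inv f := by
    funext x
    simp
  right_inv f := by
    funext x
    simp

/-- The group commutator `K(A,B) = A⁻¹ ∘ B⁻¹ ∘ A ∘ B` of invertible linear maps. -/
def Kc {R M : Type*} [CommRing R] [AddCommGroup M] [Module R M]
    (A B : M ≃ₗ[R] M) : M ≃ₗ[R] M :=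
  B.trans (A.trans (B.symm.trans A.symm))

/-- A diagonal sign operator with exponent function `E`. -/
noncomputable def diagE {m : ℕ} (E : (Fin m → Bool) → ℕ) :
    ((Fin m → Bool) → ℂ) ≃ₗ[ℂ] ((Fin m → Bool) → ℂ) where
  toFun f := fun x => (-1 : ℂ) ^ (E x) * f x
  invFun f := fun x => (-1 : ℂ) ^ (E x) * f x
  map_add' f f' := by funext x; simp [mul_add]
  map_smul' c f := by funext x; simp; ring
  left_inv f := by
    funext x
    show (-1 : ℂ) ^ (E x) * ((-1 : ℂ) ^ (E x) * f x) = f x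
    rw [← mul_assoc, ← pow_add, Even.neg_one_pow ⟨_, rfl⟩, one_mul]
  right_inv f := by
    funext x
    show (-1 : ℂ) ^ (E x) * ((-1 : ℂ) ^ (E x) * f x) = f x
    rw [← mul_assoc, ← pow_add, Even.neg_one_pow ⟨_, rfl⟩, one_mul]

lemma diagE_apply {m : ℕ} (E : (Fin m → Bool) → ℕ) (f : (Fin m → Bool) → ℂ)
    (x : Fin m → Bool) : diagE E f x = (-1 : ℂ) ^ (E x) * f x := rfl

lemma diagE_symm_apply {m : ℕ} (E : (Fin m → Bool) → ℕ) (f : (Fin m → Bool) → ℂ)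
    (x : Fin m → Bool) : (diagE E).symm f x = (-1 : ℂ) ^ (E x) * f x := rfl

lemma Xop_apply {m : ℕ} (j : Fin m) (f : (Fin m → Bool) → ℂ) (x : Fin m → Bool) :
    Xop j f x = f (Function.update x j (!(x j))) := rfl

lemma Xop_symm_apply {m : ℕ} (j : Fin m) (f : (Fin m → Bool) → ℂ) (x : Fin m → Bool) :
    (Xop j).symm f x = f (Function.update x j (!(x j))) := rfl

lemma Xflip_flip {m : ℕ} (j : Fin m) (x : Fin m → Bool) :
    Function.update (Function.update x j (!(x j))) j
      (!(Function.update x j (!(x j)) j)) = x := by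
  simp

lemma Kc_diagE_Xop {m : ℕ} (E : (Fin m → Bool) → ℕ) (j : Fin m) :
    Kc (diagE E) (Xop j) =
      diagE (fun x => E x + E (Function.update x j (!(x j)))) := by
  refine LinearEquiv.ext fun f => ?_
  funext x
  show (diagE E).symm ((Xop j).symm (diagE E (Xop j f))) x = _
  rw [diagE_symm_apply, Xop_symm_apply, diagE_apply, Xop_apply, Xflip_flip,
    diagE_apply, ← mul_assoc, ← pow_add]

/-- Exponent: product of the bits in `s`. -/
def Ebit {m : ℕ} (s : Finset (Fin m)) : (Fin m → Bool) → ℕ :=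
  fun x => ∏ i ∈ s, (if x i then 1 else 0 : ℕ)

lemma Ebit_step {m : ℕ} (s : Finset (Fin m)) (j : Fin m) (hj : j ∈ s)
    (x : Fin m → Bool) :
    Ebit s x + Ebit s (Function.update x j (!(x j))) = Ebit (s.erase j) x := by
  unfold Ebit
  rw [← Finset.mul_prod_erase s _ hj, ← Finset.mul_prod_erase s _ hj]
  have h1 : ∀ i ∈ s.erase j,
      (if Function.update x j (!(x j)) i then 1 else 0 : ℕ) =
      (if x i then 1 else 0 : ℕ) := by
    intro i hi
    rw [Function.update_of_ne (Finset.ne_of_mem_erase hi)]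
  rw [Finset.prod_congr rfl h1, Function.update_self]
  cases hx : x j <;> simp

lemma foldl_Kc_diagE {m : ℕ} (l : List (Fin m)) (hl : l.Nodup) :
    List.foldl Kc (diagE (Ebit l.toFinset)) (l.map Xop) = diagE (Ebit ∅) := by
  induction l with
  | nil => rfl
  | cons j t ih =>
    have hjt : j ∉ t := (List.nodup_cons.mp hl).1
    have ht : t.Nodup := (List.nodup_cons.mp hl).2
    rw [List.map_cons, List.foldl_cons, Kc_diagE_Xop]
    have hE : (fun x => Ebit (j :: t).toFinset x +
        Ebit (j :: t).toFinset (Function.update x j (!(x j)))) = Ebit t.toFinset := by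
      funext x
      rw [Ebit_step _ j (by simp) x, List.toFinset_cons,
        Finset.erase_insert (by simpa using hjt)]
    rw [hE, ih ht]

/-- For `m ≥ 1`, the `m`-fold sequential group commutator of the
`(m−1)`-fold controlled-`Z` gate with the bit-flip operators `X₁, …, X_m` is `−id`:
`K(⋯K(K(D,X₁),X₂)⋯,X_m) = −id`. -/
theorem seq_commutator_CZ_eq_neg_id (m : ℕ) (hm : 1 ≤ m) :
    ∀ f : (Fin m → Bool) → ℂ,
      (List.foldl Kc (Dop m) (List.ofFn fun j : Fin m => Xop j)) f = -f := by
  have hD : Dop m = diagE (Ebit (Finset.univ : Finset (Fin m))) := rfl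
  have hofn : (List.ofFn fun j : Fin m => Xop j) = (List.finRange m).map Xop := by
    simp [List.ofFn_eq_map]
  intro f
  rw [hD, hofn]
  have := foldl_Kc_diagE (List.finRange m) (List.nodup_finRange m)
  rw [List.toFinset_finRange] at this
  rw [this]
  funext x
  show (-1 : ℂ) ^ (Ebit (∅ : Finset (Fin m)) x) * f x = -f x
  simp [Ebit]
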